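/- arXiv:2504.09735 — 2 statements merged into one kernel-verified Lean document; each statement's English description precedes it below -/
import Mathlib

section
/- Let x, t, v ∈ ℂ be nonzero and λ, ε ∈ ℝ. Define f^ϑ_{x,t,v,λ,ε}(z) := (tq^{1−2iλ}x^{±1}, tvq^{1+iλ}/z;q²)_∞ · θ(vq^{−2ε−iλ}/(tz);q²) / (vq^{−iλ}x^{±1}/z, tzq^{1−iλ}/v;q²)_∞. Then for every z ∈ ℂ∖{0} such that the denominators are nonzero at z and at z/q², one has (π_{λ,ε}(Ỹ_{t,v}) f^ϑ_{x,t,v,λ,ε})(z) = (μ_x − μ_t)·f^ϑ_{x,t,v,λ,ε}(z). -/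
noncomputable section

open Complex

/-- `q^{iλ} := exp(iλ · log q)`. -/
def qil (q lam : ℝ) : ℂ := Complex.exp (Complex.I * lam * Real.log q)

/-- the real power `q^a` viewed as a complex number. -/
def qr (q a : ℝ) : ℂ := ((q ^ a : ℝ) : ℂ)

/-- the infinite `q`-shifted factorial `(w;p)_∞ = ∏_{j≥0} (1 - w p^j)`. -/
def qPoch (w p : ℂ) : ℂ := ∏' j : ℕ, (1 - w * p ^ j)

/-- the theta function `θ(w;p) = (w;p)_∞ (p/w;p)_∞`. -/
def qTheta (w p : ℂ) : ℂ := qPoch w p * qPoch (p / w) p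

/-- `μ_s = (s + s⁻¹)/(q⁻¹ - q)`. -/
def mu (q : ℝ) (s : ℂ) : ℂ := (s + s⁻¹) / ((q : ℂ)⁻¹ - (q : ℂ))

/-- The eigenfunction
`f_{x,s,u,λ,ε}(z) = (sq^{1−2iλ}x^{±1}, uszq^{1+iλ};q²)_∞ θ(q^{2ε−iλ}uz/s;q²) /
(uzq^{−iλ}x^{±1}, sq^{1−iλ}/(uz);q²)_∞`. -/
def fAW (q lam eps : ℝ) (x s u : ℂ) (z : ℂ) : ℂ :=
  (qPoch (s * (q : ℂ) * ((qil q lam)⁻¹) ^ 2 * x) ((q : ℂ) ^ 2) *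
    qPoch (s * (q : ℂ) * ((qil q lam)⁻¹) ^ 2 / x) ((q : ℂ) ^ 2) *
    qPoch (u * s * z * (q : ℂ) * qil q lam) ((q : ℂ) ^ 2) *
    qTheta (qr q (2 * eps) * (qil q lam)⁻¹ * u * z / s) ((q : ℂ) ^ 2)) /
  (qPoch (u * z * (qil q lam)⁻¹ * x) ((q : ℂ) ^ 2) *
    qPoch (u * z * (qil q lam)⁻¹ / x) ((q : ℂ) ^ 2) *
    qPoch (s * (q : ℂ) * (qil q lam)⁻¹ / (u * z)) ((q : ℂ) ^ 2))

/-- the denominator of `f_{x,s,u,λ,ε}` at the point `z`. -/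
def fDen (q lam : ℝ) (x s u : ℂ) (z : ℂ) : ℂ :=
  qPoch (u * z * (qil q lam)⁻¹ * x) ((q : ℂ) ^ 2) *
    qPoch (u * z * (qil q lam)⁻¹ / x) ((q : ℂ) ^ 2) *
    qPoch (s * (q : ℂ) * (qil q lam)⁻¹ / (u * z)) ((q : ℂ) ^ 2)
/-- action of the twisted primitive element `Ỹ_{t,w}` in the representation `π_{λ,ε}`. -/
def piYt (q lam eps : ℝ) (t w : ℂ) (f : ℂ → ℂ) (z : ℂ) : ℂ :=
  qr q (-(2 * eps)) *
      ((t + t⁻¹ - w⁻¹ * z * (q : ℂ)⁻¹ * (qil q lam)⁻¹ - w * z⁻¹ * (q : ℂ) * qil q lam) /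
        ((q : ℂ)⁻¹ - (q : ℂ))) * f (z / (q : ℂ) ^ 2)
    + ((w⁻¹ * z * qil q lam + w * z⁻¹ * (qil q lam)⁻¹ - t - t⁻¹) / ((q : ℂ)⁻¹ - (q : ℂ))) * f z

/-- The eigenfunction
`f^ϑ_{x,t,v,λ,ε}(z) = (tq^{1−2iλ}x^{±1}, tvq^{1+iλ}/z;q²)_∞ θ(vq^{−2ε−iλ}/(tz);q²) /
(vq^{−iλ}x^{±1}/z, tzq^{1−iλ}/v;q²)_∞`. -/
def fT (q lam eps : ℝ) (x t v : ℂ) (z : ℂ) : ℂ :=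
  (qPoch (t * (q : ℂ) * ((qil q lam)⁻¹) ^ 2 * x) ((q : ℂ) ^ 2) *
    qPoch (t * (q : ℂ) * ((qil q lam)⁻¹) ^ 2 / x) ((q : ℂ) ^ 2) *
    qPoch (t * v * (q : ℂ) * qil q lam / z) ((q : ℂ) ^ 2) *
    qTheta (v * qr q (-(2 * eps)) * (qil q lam)⁻¹ / (t * z)) ((q : ℂ) ^ 2)) /
  (qPoch (v * (qil q lam)⁻¹ * x / z) ((q : ℂ) ^ 2) *
    qPoch (v * (qil q lam)⁻¹ / (x * z)) ((q : ℂ) ^ 2) *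
    qPoch (t * z * (q : ℂ) * (qil q lam)⁻¹ / v) ((q : ℂ) ^ 2))

/-- the denominator of `f^ϑ_{x,t,v,λ,ε}` at the point `z`. -/
def fTDen (q lam : ℝ) (x t v : ℂ) (z : ℂ) : ℂ :=
  qPoch (v * (qil q lam)⁻¹ * x / z) ((q : ℂ) ^ 2) *
    qPoch (v * (qil q lam)⁻¹ / (x * z)) ((q : ℂ) ^ 2) *
    qPoch (t * z * (q : ℂ) * (qil q lam)⁻¹ / v) ((q : ℂ) ^ 2)


lemma multipliable_qPochAux (w p : ℂ) (hp : ‖p‖ < 1) :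
    Multipliable (fun j : ℕ => 1 - w * p ^ j) := by
  by_cases hzz : ∃ j : ℕ, 1 - w * p ^ j = 0
  · obtain ⟨j₀, hj₀⟩ := hzz
    refine ⟨0, ?_⟩
    have hev : ∀ᶠ s : Finset ℕ in Filter.atTop,
        (∏ i ∈ s, (1 - w * p ^ i)) = 0 := by
      filter_upwards [Filter.eventually_ge_atTop ({j₀} : Finset ℕ)] with s hs
      exact Finset.prod_eq_zero (hs (Finset.mem_singleton_self j₀)) hj₀
    exact Filter.Tendsto.congr' (Filter.EventuallyEq.symm hev) tendsto_const_nhds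
  · push_neg at hzz
    have hsum : Summable (fun n : ℕ => Complex.log (1 - w * p ^ n)) := by
      have hb : Summable (fun n : ℕ => 3/2 * (‖w‖ * ‖p‖ ^ n)) :=
        (((summable_geometric_of_lt_one (norm_nonneg p) hp).mul_left ‖w‖).mul_left _)
      refine Summable.of_norm_bounded_eventually hb ?_
      rw [Nat.cofinite_eq_atTop]
      have hto : Filter.Tendsto (fun n : ℕ => ‖w‖ * ‖p‖ ^ n) Filter.atTop (nhds 0) := by
        simpa using (tendsto_pow_atTop_nhds_zero_of_lt_one (norm_nonneg p) hp).const_mul ‖w‖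
      filter_upwards [hto.eventually_le_const (by norm_num : (0:ℝ) < 1/2)] with n hn
      have h1 : ‖-(w * p ^ n)‖ ≤ 1/2 := by
        rwa [norm_neg, norm_mul, norm_pow]
      have h2 := Complex.norm_log_one_add_half_le_self h1
      rw [show (1 : ℂ) + -(w * p ^ n) = 1 - w * p ^ n by ring] at h2
      calc ‖Complex.log (1 - w * p ^ n)‖ ≤ 3/2 * ‖-(w * p ^ n)‖ := h2
        _ = 3/2 * (‖w‖ * ‖p‖ ^ n) := by rw [norm_neg, norm_mul, norm_pow]
    exact Complex.multipliable_of_summable_log hsum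

set_option maxHeartbeats 1000000 in
lemma qPoch_shift (w p : ℂ) (hp : ‖p‖ < 1) :
    qPoch w p = (1 - w) * qPoch (w * p) p := by
  have hm : Multipliable (fun n : ℕ => 1 - w * p ^ (n + 1)) := by
    have h := multipliable_qPochAux (w * p) p hp
    refine h.congr fun n => ?_
    rw [pow_succ]; ring
  rw [qPoch, tprod_eq_zero_mul' hm]
  rw [pow_zero, mul_one, qPoch]
  congr 1
  exact tprod_congr fun n => by rw [pow_succ]; ring

set_option maxHeartbeats 4000000 in
lemma scalarKeyAux (Q A E x t v z : ℂ) (hQ : Q ≠ 0) (hA : A ≠ 0) (hE : E ≠ 0) (hx : x ≠ 0)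
    (ht : t ≠ 0) (hv : v ≠ 0) (hz : z ≠ 0) (hq2 : 1 - Q ^ 2 ≠ 0)
    (hg' : z - t * v * Q * A ≠ 0) (hw' : t * z * A - v * E ≠ 0)
    (hd' : v * Q * A - t * z ≠ 0) :
    E * ((t + t⁻¹ - v⁻¹ * z * Q⁻¹ * A⁻¹ - v * z⁻¹ * Q * A) / (Q⁻¹ - Q)) *
      ((1 - v * A⁻¹ * x / z) * (1 - v * A⁻¹ / (x * z)) * (1 - (v * E * A⁻¹ / (t * z))⁻¹) /
        ((1 - t * v * Q * A / z) * (1 - v * E * A⁻¹ / (t * z)) * (1 - t * (z / Q ^ 2) * Q * A⁻¹ / v)))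
    + (v⁻¹ * z * A + v * z⁻¹ * A⁻¹ - t - t⁻¹) / (Q⁻¹ - Q)
    = (x + x⁻¹) / (Q⁻¹ - Q) - (t + t⁻¹) / (Q⁻¹ - Q) := by
  rw [show (1 : ℂ) - t * v * Q * A / z = (z - t * v * Q * A) / z from by field_simp,
      show (1 : ℂ) - v * E * A⁻¹ / (t * z) = (t * z * A - v * E) / (t * z * A) from by
        field_simp; try ring,
      show (1 : ℂ) - (v * E * A⁻¹ / (t * z))⁻¹ = (v * E - t * z * A) / (v * E) from by
        rw [inv_div]
        field_simp
        try ring,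
      show (1 : ℂ) - v * A⁻¹ * x / z = (z * A - v * x) / (z * A) from by field_simp; try ring,
      show (1 : ℂ) - v * A⁻¹ / (x * z) = (x * z * A - v) / (x * z * A) from by
        field_simp; try ring,
      show (1 : ℂ) - t * (z / Q ^ 2) * Q * A⁻¹ / v = (v * Q * A - t * z) / (v * Q * A) from by
        field_simp; try ring,
      show Q⁻¹ - Q = (1 - Q ^ 2) / Q from by field_simp; try ring]
  set sg := z - t * v * Q * A with hsg
  set sw := t * z * A - v * E with hsw
  set swi := v * E - t * z * A with hswi
  set sa1 := z * A - v * x with hsa1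
  set sa2 := x * z * A - v with hsa2
  set sd := v * Q * A - t * z with hsd
  set sq := 1 - Q ^ 2 with hsq
  field_simp
  have hDD1 : t * (v * Q * A) * z * sq * (z * A * (x * z * A) * (v * E) * (sg * sw * sd)) ≠ 0 := by
    apply_rules [mul_ne_zero]
  have hDD2 : v * (z * A) * t * sq ≠ 0 := by apply_rules [mul_ne_zero]
  rw [hsg, hsw, hswi, hsa1, hsa2, hsd]
  ring

set_option maxHeartbeats 4000000 in
/-- `f^ϑ_{x,t,v,λ,ε}` is an eigenfunction of `π_{λ,ε}(Ỹ_{t,v})` with eigenvalue `μ_x − μ_t`. -/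
theorem stmt6 (q : ℝ) (hq0 : 0 < q) (hq1 : q < 1) (lam eps : ℝ) (x t v : ℂ)
    (hx : x ≠ 0) (ht : t ≠ 0) (hv : v ≠ 0) (z : ℂ) (hz : z ≠ 0)
    (hd1 : fTDen q lam x t v z ≠ 0) (hd2 : fTDen q lam x t v (z / (q : ℂ) ^ 2) ≠ 0) :
    piYt q lam eps t v (fT q lam eps x t v) z = (mu q x - mu q t) * fT q lam eps x t v z := by
  have hQ : (q : ℂ) ≠ 0 := by exact_mod_cast hq0.ne'
  have hQ2 : ((q : ℂ) ^ 2) ≠ 0 := pow_ne_zero 2 hQ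
  have hp : ‖((q : ℂ) ^ 2)‖ < 1 := by
    rw [norm_pow, Complex.norm_real, Real.norm_eq_abs, abs_of_pos hq0]
    nlinarith
  have S : ∀ u : ℂ, qPoch u ((q : ℂ) ^ 2) = (1 - u) * qPoch (u * (q : ℂ) ^ 2) ((q : ℂ) ^ 2) :=
    fun u => qPoch_shift u _ hp
  have hA : qil q lam ≠ 0 := by simp only [qil]; exact Complex.exp_ne_zero _
  have hA' : (qil q lam)⁻¹ ≠ 0 := inv_ne_zero hA
  have hE : qr q (-(2 * eps)) ≠ 0 :=
    Complex.ofReal_ne_zero.mpr (Real.rpow_pos_of_pos hq0 _).ne'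
  have hq2 : 1 - (q : ℂ) ^ 2 ≠ 0 := by
    intro h
    have h2 : (q : ℂ) ^ 2 = 1 := by linear_combination -h
    have h3 : (q : ℝ) ^ 2 = 1 := by exact_mod_cast h2
    nlinarith
  -- process the denominator hypotheses
  simp only [fTDen] at hd1 hd2
  rw [S (v * (qil q lam)⁻¹ * x / z), S (v * (qil q lam)⁻¹ / (x * z))] at hd1
  rw [show v * (qil q lam)⁻¹ * x / (z / (q : ℂ) ^ 2)
        = v * (qil q lam)⁻¹ * x / z * (q : ℂ) ^ 2 from by
          rw [div_div_eq_mul_div]; ring,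
      show v * (qil q lam)⁻¹ / (x * (z / (q : ℂ) ^ 2))
        = v * (qil q lam)⁻¹ / (x * z) * (q : ℂ) ^ 2 from by
          field_simp,
      S (t * (z / (q : ℂ) ^ 2) * (q : ℂ) * (qil q lam)⁻¹ / v),
      show t * (z / (q : ℂ) ^ 2) * (q : ℂ) * (qil q lam)⁻¹ / v * (q : ℂ) ^ 2
        = t * z * (q : ℂ) * (qil q lam)⁻¹ / v from by
          field_simp; try ring] at hd2
  have hd1R := hd1
  have hd2R := hd2
  obtain ⟨h12, hDb⟩ := mul_ne_zero_iff.mp hd1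
  obtain ⟨h1d, h2d⟩ := mul_ne_zero_iff.mp h12
  obtain ⟨ha1, hD1⟩ := mul_ne_zero_iff.mp h1d
  obtain ⟨ha2, hD2⟩ := mul_ne_zero_iff.mp h2d
  obtain ⟨-, h3d⟩ := mul_ne_zero_iff.mp hd2
  obtain ⟨hdel, -⟩ := mul_ne_zero_iff.mp h3d
  -- degenerate case 1
  by_cases hg0 : 1 - t * v * (q : ℂ) * qil q lam / z = 0
  · have hz0 : z - t * v * (q : ℂ) * qil q lam = 0 := by
      field_simp at hg0
      first
      | linear_combination hg0
      | linear_combination -hg0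
    have hFz : fT q lam eps x t v z = 0 := by
      simp only [fT, qTheta]
      rw [S (t * v * (q : ℂ) * qil q lam / z), hg0]
      simp
    have hcoef : t + t⁻¹ - v⁻¹ * z * (q : ℂ)⁻¹ * (qil q lam)⁻¹
        - v * z⁻¹ * (q : ℂ) * qil q lam = 0 := by
      rw [show t + t⁻¹ - v⁻¹ * z * (q : ℂ)⁻¹ * (qil q lam)⁻¹ - v * z⁻¹ * (q : ℂ) * qil q lam
            = (z - t * v * (q : ℂ) * qil q lam) * (v * (q : ℂ) * qil q lam - t * z)
              / (t * v * z * (q : ℂ) * qil q lam) from by field_simp; try ring,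
          hz0]
      simp
    simp only [piYt, mu]
    rw [hcoef, hFz]
    simp
  -- degenerate case 2
  by_cases hw0 : 1 - v * qr q (-(2 * eps)) * (qil q lam)⁻¹ / (t * z) = 0
  · have hw1 : v * qr q (-(2 * eps)) * (qil q lam)⁻¹ / (t * z) = 1 := by
      linear_combination -hw0
    have hFz : fT q lam eps x t v z = 0 := by
      simp only [fT, qTheta]
      rw [S (v * qr q (-(2 * eps)) * (qil q lam)⁻¹ / (t * z)), hw0]
      simp
    have hFz' : fT q lam eps x t v (z / (q : ℂ) ^ 2) = 0 := by
      simp only [fT, qTheta]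
      rw [show v * qr q (-(2 * eps)) * (qil q lam)⁻¹ / (t * (z / (q : ℂ) ^ 2))
            = v * qr q (-(2 * eps)) * (qil q lam)⁻¹ / (t * z) * (q : ℂ) ^ 2 from by
              field_simp,
          hw1, one_mul, div_self hQ2, S 1]
      simp
    simp only [piYt, mu]
    rw [hFz, hFz']
    simp
  -- main case
  have hY : (1 - t * v * (q : ℂ) * qil q lam / z)
      * (1 - v * qr q (-(2 * eps)) * (qil q lam)⁻¹ / (t * z))
      * (1 - t * (z / (q : ℂ) ^ 2) * (q : ℂ) * (qil q lam)⁻¹ / v) ≠ 0 :=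
    mul_ne_zero (mul_ne_zero hg0 hw0) hdel
  have hR : fT q lam eps x t v (z / (q : ℂ) ^ 2)
      * ((1 - t * v * (q : ℂ) * qil q lam / z)
        * (1 - v * qr q (-(2 * eps)) * (qil q lam)⁻¹ / (t * z))
        * (1 - t * (z / (q : ℂ) ^ 2) * (q : ℂ) * (qil q lam)⁻¹ / v))
      = fT q lam eps x t v z
      * ((1 - v * (qil q lam)⁻¹ * x / z) * (1 - v * (qil q lam)⁻¹ / (x * z))
        * (1 - (v * qr q (-(2 * eps)) * (qil q lam)⁻¹ / (t * z))⁻¹)) := by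
    simp only [fT, qTheta]
    rw [show (q : ℂ) ^ 2 / (v * qr q (-(2 * eps)) * (qil q lam)⁻¹ / (t * z))
          = (v * qr q (-(2 * eps)) * (qil q lam)⁻¹ / (t * z))⁻¹ * (q : ℂ) ^ 2 from by
            rw [div_eq_mul_inv, mul_comm],
        S (t * v * (q : ℂ) * qil q lam / z),
        S (v * qr q (-(2 * eps)) * (qil q lam)⁻¹ / (t * z)),
        S (v * (qil q lam)⁻¹ * x / z),
        S (v * (qil q lam)⁻¹ / (x * z)),
        show t * v * (q : ℂ) * qil q lam / (z / (q : ℂ) ^ 2)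
          = t * v * (q : ℂ) * qil q lam / z * (q : ℂ) ^ 2 from by
            rw [div_div_eq_mul_div]; ring,
        show v * qr q (-(2 * eps)) * (qil q lam)⁻¹ / (t * (z / (q : ℂ) ^ 2))
          = v * qr q (-(2 * eps)) * (qil q lam)⁻¹ / (t * z) * (q : ℂ) ^ 2 from by
            field_simp,
        show (q : ℂ) ^ 2 / (v * qr q (-(2 * eps)) * (qil q lam)⁻¹ / (t * z) * (q : ℂ) ^ 2)
          = (v * qr q (-(2 * eps)) * (qil q lam)⁻¹ / (t * z))⁻¹ from by
            rw [mul_comm, ← div_div, div_self hQ2, one_div],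
        S (v * qr q (-(2 * eps)) * (qil q lam)⁻¹ / (t * z))⁻¹,
        show v * (qil q lam)⁻¹ * x / (z / (q : ℂ) ^ 2)
          = v * (qil q lam)⁻¹ * x / z * (q : ℂ) ^ 2 from by
            rw [div_div_eq_mul_div]; ring,
        show v * (qil q lam)⁻¹ / (x * (z / (q : ℂ) ^ 2))
          = v * (qil q lam)⁻¹ / (x * z) * (q : ℂ) ^ 2 from by
            field_simp,
        S (t * (z / (q : ℂ) ^ 2) * (q : ℂ) * (qil q lam)⁻¹ / v),
        show t * (z / (q : ℂ) ^ 2) * (q : ℂ) * (qil q lam)⁻¹ / v * (q : ℂ) ^ 2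
          = t * z * (q : ℂ) * (qil q lam)⁻¹ / v from by
            field_simp; try ring]
    conv_lhs => rw [div_mul_eq_mul_div]
    conv_rhs => rw [div_mul_eq_mul_div]
    rw [div_eq_div_iff hd2R hd1R]
    ring
  have hF' : fT q lam eps x t v (z / (q : ℂ) ^ 2)
      = fT q lam eps x t v z
        * ((1 - v * (qil q lam)⁻¹ * x / z) * (1 - v * (qil q lam)⁻¹ / (x * z))
          * (1 - (v * qr q (-(2 * eps)) * (qil q lam)⁻¹ / (t * z))⁻¹))
        / ((1 - t * v * (q : ℂ) * qil q lam / z)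
          * (1 - v * qr q (-(2 * eps)) * (qil q lam)⁻¹ / (t * z))
          * (1 - t * (z / (q : ℂ) ^ 2) * (q : ℂ) * (qil q lam)⁻¹ / v)) := by
    rw [eq_div_iff hY]
    linear_combination hR
  have hg' : z - t * v * (q : ℂ) * qil q lam ≠ 0 := by
    intro h
    apply hg0
    field_simp
    first
    | linear_combination h
    | linear_combination -h
  have hw' : t * z * qil q lam - v * qr q (-(2 * eps)) ≠ 0 := by
    intro h
    apply hw0
    field_simp
    first
    | linear_combination h
    | linear_combination -h
  have hd' : v * (q : ℂ) * qil q lam - t * z ≠ 0 := by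
    intro h
    apply hdel
    field_simp
    first
    | linear_combination h
    | linear_combination -h
    | linear_combination (q : ℂ) * h
    | linear_combination -((q : ℂ) * h)
  have hscal := scalarKeyAux ((q : ℂ)) (qil q lam) (qr q (-(2 * eps))) x t v z
    hQ hA hE hx ht hv hz hq2 hg' hw' hd'
  simp only [piYt, mu]
  rw [hF']
  linear_combination fT q lam eps x t v z * hscal


end
end

section
/- Let λ, ε ∈ ℝ and let s, u, t, v ∈ ℂ be nonzero. Then for every function f : ℂ∖{0} → ℂ and every z ∈ ℂ∖{0}: (π_{λ,ε}(Ỹ_{t,v⁻¹})f)(z) = ((qu/v − v/(uq))/(q⁻²−q²))·(π_{λ,ε}(K⁻²)(π_{λ,ε}(Y_{s,u})f))(z) + ((vq/u − u/(vq))/(q⁻²−q²))·(π_{λ,ε}(Y_{s,u})(π_{λ,ε}(K⁻²)f))(z) + (((q⁻¹+q)(t+t⁻¹) − (v/u+u/v)(s+s⁻¹))/(q⁻²−q²))·((π_{λ,ε}(K⁻²)f)(z) − f(z)). (This is the identity Ỹ_{t,v⁻¹} = ((qu/v−v/uq)/(q⁻²−q²))K⁻²Y_{s,u} + ((vq/u−u/vq)/(q⁻²−q²))Y_{s,u}K⁻²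 + (((q⁻¹+q)(t+t⁻¹)−(v/u+u/v)(s+s⁻¹))/(q⁻²−q²))(K⁻²−1) realized in the representation π_{λ,ε}.) -/
noncomputable section

open Complex

/-- action of the twisted primitive element `Y_{s,u}` in the representation `π_{λ,ε}`. -/
def piY (q lam eps : ℝ) (s u : ℂ) (f : ℂ → ℂ) (z : ℂ) : ℂ :=
  qr q (2 * eps) *
      ((s + s⁻¹ - u * z * (q : ℂ) * qil q lam - u⁻¹ * z⁻¹ * (q : ℂ)⁻¹ * (qil q lam)⁻¹) /
        ((q : ℂ)⁻¹ - (q : ℂ))) * f ((q : ℂ) ^ 2 * z)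
    + ((u * z * (qil q lam)⁻¹ + u⁻¹ * z⁻¹ * qil q lam - s - s⁻¹) / ((q : ℂ)⁻¹ - (q : ℂ))) * f z
/-- action of `K⁻²` in the representation `π_{λ,ε}`. -/
def piKinv2 (q : ℝ) (eps : ℝ) (f : ℂ → ℂ) (z : ℂ) : ℂ := qr q (-(2 * eps)) * f (z / (q : ℂ) ^ 2)

set_option maxHeartbeats 3200000 in
/-- The identity
`Ỹ_{t,v⁻¹} = ((qu/v−v/uq)/(q⁻²−q²)) K⁻²Y_{s,u} + ((vq/u−u/vq)/(q⁻²−q²)) Y_{s,u}K⁻²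
 + (((q⁻¹+q)(t+t⁻¹)−(v/u+u/v)(s+s⁻¹))/(q⁻²−q²)) (K⁻²−1)`
realized in the representation `π_{λ,ε}`. -/
theorem stmt7 (q : ℝ) (hq0 : 0 < q) (hq1 : q < 1) (lam eps : ℝ) (s u t v : ℂ)
    (hs : s ≠ 0) (hu : u ≠ 0) (ht : t ≠ 0) (hv : v ≠ 0) (f : ℂ → ℂ) (z : ℂ) (hz : z ≠ 0) :
    piYt q lam eps t v⁻¹ f z
      = (((q : ℂ) * u / v - v / (u * (q : ℂ))) / (((q : ℂ) ^ 2)⁻¹ - (q : ℂ) ^ 2)) *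
          piKinv2 q eps (piY q lam eps s u f) z
        + ((v * (q : ℂ) / u - u / (v * (q : ℂ))) / (((q : ℂ) ^ 2)⁻¹ - (q : ℂ) ^ 2)) *
          piY q lam eps s u (piKinv2 q eps f) z
        + ((((q : ℂ)⁻¹ + (q : ℂ)) * (t + t⁻¹) - (v / u + u / v) * (s + s⁻¹)) /
            (((q : ℂ) ^ 2)⁻¹ - (q : ℂ) ^ 2)) * (piKinv2 q eps f z - f z) := by
  have hqC : (q : ℂ) ≠ 0 := Complex.ofReal_ne_zero.mpr (ne_of_gt hq0)
  have hq1' : (q : ℂ) ^ 2 ≠ 1 := by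
    intro h
    have : (q:ℝ)^2 = 1 := by exact_mod_cast h
    nlinarith
  have hd : (q : ℂ)⁻¹ - (q : ℂ) ≠ 0 := by
    intro h
    apply hq1'
    field_simp at h
    linear_combination -h
  have hD : ((q : ℂ) ^ 2)⁻¹ - (q : ℂ) ^ 2 ≠ 0 := by
    intro h
    have h2 : ((q : ℂ)^2)^2 = 1 := by
      field_simp at h
      linear_combination -h
    have h3 : ((q:ℝ)^2)^2 = 1 := by exact_mod_cast h2
    have hq2 : (q:ℝ)^2 < 1 := by nlinarith
    have h4 : ((q:ℝ)^2)^2 < 1 := by nlinarith [sq_nonneg q]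
    linarith
  have hL : qil q lam ≠ 0 := Complex.exp_ne_zero _
  have hE : qr q (2 * eps) ≠ 0 := by
    simp only [qr, ne_eq, Complex.ofReal_eq_zero]
    exact (Real.rpow_pos_of_pos hq0 _).ne'
  have hEinv : qr q (-(2 * eps)) = (qr q (2 * eps))⁻¹ := by
    simp only [qr, ← Complex.ofReal_inv, Real.rpow_neg hq0.le]
  have harg1 : (q : ℂ) ^ 2 * (z / (q : ℂ) ^ 2) = z := by field_simp
  have harg2 : (q : ℂ) ^ 2 * z / (q : ℂ) ^ 2 = z := by field_simp
  simp only [piYt, piY, piKinv2, hEinv, harg1, harg2]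
  set L := qil q lam with hLdef
  set E := qr q (2 * eps) with hEdef
  generalize f (z / (q : ℂ) ^ 2) = F2
  generalize f z = F1
  have h1q2 : (1 : ℂ) - (q : ℂ) ^ 2 ≠ 0 := by
    intro h; apply hq1'; linear_combination -h
  have h1q4 : (1 : ℂ) - (q : ℂ) ^ 4 ≠ 0 := by
    intro h
    have h2 : ((q : ℂ) ^ 2) ^ 2 = 1 := by linear_combination -h
    have h3 : ((q:ℝ)^2)^2 = 1 := by exact_mod_cast h2
    have hq2 : (q:ℝ)^2 < 1 := by nlinarith
    have h4 : ((q:ℝ)^2)^2 < 1 := by nlinarith [sq_nonneg q]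
    linarith
  have hF2 : E⁻¹ * ((t + t⁻¹ - (v⁻¹)⁻¹ * z * ((q:ℂ))⁻¹ * L⁻¹ - v⁻¹ * z⁻¹ * (q:ℂ) * L) / (((q:ℂ))⁻¹ - (q:ℂ)))
      = ((q:ℂ) * u / v - v / (u * (q:ℂ))) / (((q:ℂ) ^ 2)⁻¹ - (q:ℂ) ^ 2) *
          (E⁻¹ * ((u * (z / (q:ℂ) ^ 2) * L⁻¹ + u⁻¹ * (z / (q:ℂ) ^ 2)⁻¹ * L - s - s⁻¹) / (((q:ℂ))⁻¹ - (q:ℂ))))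
        + (v * (q:ℂ) / u - u / (v * (q:ℂ))) / (((q:ℂ) ^ 2)⁻¹ - (q:ℂ) ^ 2) *
          ((u * z * L⁻¹ + u⁻¹ * z⁻¹ * L - s - s⁻¹) / (((q:ℂ))⁻¹ - (q:ℂ)) * E⁻¹)
        + ((((q:ℂ))⁻¹ + (q:ℂ)) * (t + t⁻¹) - (v / u + u / v) * (s + s⁻¹)) / (((q:ℂ) ^ 2)⁻¹ - (q:ℂ) ^ 2) * E⁻¹ := by
    rw [show ((q:ℂ))⁻¹ - (q:ℂ) = (1 - (q:ℂ)^2)/(q:ℂ) by field_simp,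
      show ((q:ℂ)^2)⁻¹ - (q:ℂ)^2 = (1 - (q:ℂ)^4)/(q:ℂ)^2 by field_simp]
    field_simp
    ring
  have hF1 : ((v⁻¹)⁻¹ * z * L + v⁻¹ * z⁻¹ * L⁻¹ - t - t⁻¹) / (((q:ℂ))⁻¹ - (q:ℂ))
      = ((q:ℂ) * u / v - v / (u * (q:ℂ))) / (((q:ℂ) ^ 2)⁻¹ - (q:ℂ) ^ 2) *
          (E⁻¹ * (E * ((s + s⁻¹ - u * (z / (q:ℂ) ^ 2) * (q:ℂ) * L - u⁻¹ * (z / (q:ℂ) ^ 2)⁻¹ * ((q:ℂ))⁻¹ * L⁻¹) / (((q:ℂ))⁻¹ - (q:ℂ)))))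
        + (v * (q:ℂ) / u - u / (v * (q:ℂ))) / (((q:ℂ) ^ 2)⁻¹ - (q:ℂ) ^ 2) *
          (E * ((s + s⁻¹ - u * z * (q:ℂ) * L - u⁻¹ * z⁻¹ * ((q:ℂ))⁻¹ * L⁻¹) / (((q:ℂ))⁻¹ - (q:ℂ))) * E⁻¹)
        - ((((q:ℂ))⁻¹ + (q:ℂ)) * (t + t⁻¹) - (v / u + u / v) * (s + s⁻¹)) / (((q:ℂ) ^ 2)⁻¹ - (q:ℂ) ^ 2) := by
    rw [show ((q:ℂ))⁻¹ - (q:ℂ) = (1 - (q:ℂ)^2)/(q:ℂ) by field_simp,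
      show ((q:ℂ)^2)⁻¹ - (q:ℂ)^2 = (1 - (q:ℂ)^4)/(q:ℂ)^2 by field_simp]
    field_simp
    ring
  linear_combination F2 * hF2 + F1 * hF1

end
end
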